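/- Let C be a bivariate copula admitting a tail dependence function Λ, and let μ be a tail generating measure. For p ∈ (0,1) set λ_{μ,p}(C) = (∫_{[0,1]²} (C(pu,pv) − pu·pv) dμ(u,v)) / (∫_{[0,1]²} (min(pu,pv) − pu·pv) dμ(u,v)). Then for each p ∈ (0,1) the denominator is strictly positive and finite, and lim_{p↓0} λ_{μ,p}(C) = (∫_{[0,1]²} Λ(u,v) dμ(u,v)) / (∫_{[0,1]²} min(u,v) dμ(u,v)). -/

import Mathlib

open MeasureTheory Filter Set

/-- A bivariate copula: `C : [0,1]² → [0,1]` with the grounded/marginal conditions and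
the 2-increasing property. -/
def IsCopula (C : ℝ → ℝ → ℝ) : Prop :=
  (∀ u ∈ Icc (0:ℝ) 1, ∀ v ∈ Icc (0:ℝ) 1, C u v ∈ Icc (0:ℝ) 1) ∧
  (∀ u ∈ Icc (0:ℝ) 1, C u 0 = 0 ∧ C 0 u = 0 ∧ C u 1 = u ∧ C 1 u = u) ∧
  (∀ u u' v v' : ℝ, u ∈ Icc (0:ℝ) 1 → u' ∈ Icc (0:ℝ) 1 →
    v ∈ Icc (0:ℝ) 1 → v' ∈ Icc (0:ℝ) 1 → u ≤ u' → v ≤ v' →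
    0 ≤ C u' v' - C u' v - C u v' + C u v)

/-- `Λ` is the tail dependence function of `C`:
`Λ(u,v) = lim_{p↓0} C(pu,pv)/p` for every `(u,v) ∈ [0,∞)²`. -/
def HasTDF (C Λ : ℝ → ℝ → ℝ) : Prop :=
  ∀ u v : ℝ, 0 ≤ u → 0 ≤ v →
    Tendsto (fun p : ℝ => C (p * u) (p * v) / p)
      (nhdsWithin (0:ℝ) (Ioi 0)) (nhds (Λ u v))

/-- A tail generating measure: a Borel probability measure on `[0,1]²` whose mass is not
concentrated on `{u = 0} ∪ {v = 0}`. -/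
def IsTailGenMeasure (μ : Measure (ℝ × ℝ)) : Prop :=
  IsProbabilityMeasure μ ∧
  μ ((Icc (0:ℝ) 1 ×ˢ Icc (0:ℝ) 1)ᶜ) = 0 ∧
  μ {q : ℝ × ℝ | q.1 = 0 ∨ q.2 = 0} < 1

namespace CopAux
variable {C : ℝ → ℝ → ℝ}

lemma mono_left (hC : IsCopula C) {u u' v : ℝ} (hu : u ∈ Icc (0:ℝ) 1)
    (hu' : u' ∈ Icc (0:ℝ) 1) (hv : v ∈ Icc (0:ℝ) 1) (h : u ≤ u') : C u v ≤ C u' v := by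
  have h2 := hC.2.2 u u' 0 v hu hu' (by norm_num) hv h hv.1
  have e1 := (hC.2.1 u' hu').1
  have e2 := (hC.2.1 u hu).1
  linarith

lemma mono_right (hC : IsCopula C) {u v v' : ℝ} (hu : u ∈ Icc (0:ℝ) 1)
    (hv : v ∈ Icc (0:ℝ) 1) (hv' : v' ∈ Icc (0:ℝ) 1) (h : v ≤ v') : C u v ≤ C u v' := by
  have h2 := hC.2.2 0 u v v' (by norm_num) hu hv hv' hu.1 h
  have e1 := (hC.2.1 v' hv').2.1
  have e2 := (hC.2.1 v hv).2.1
  linarith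

lemma lip_left (hC : IsCopula C) {u u' v : ℝ} (hu : u ∈ Icc (0:ℝ) 1)
    (hu' : u' ∈ Icc (0:ℝ) 1) (hv : v ∈ Icc (0:ℝ) 1) (h : u ≤ u') :
    C u' v - C u v ≤ u' - u := by
  have h2 := hC.2.2 u u' v 1 hu hu' hv (by norm_num) h hv.2
  have e1 := (hC.2.1 u' hu').2.2.1
  have e2 := (hC.2.1 u hu).2.2.1
  linarith

lemma lip_right (hC : IsCopula C) {u v v' : ℝ} (hu : u ∈ Icc (0:ℝ) 1)
    (hv : v ∈ Icc (0:ℝ) 1) (hv' : v' ∈ Icc (0:ℝ) 1) (h : v ≤ v') :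
    C u v' - C u v ≤ v' - v := by
  have h2 := hC.2.2 u 1 v v' hu (by norm_num) hv hv' hu.2 h
  have e1 := (hC.2.1 v' hv').2.2.2
  have e2 := (hC.2.1 v hv).2.2.2
  linarith

lemma abs_left (hC : IsCopula C) {a b v : ℝ} (ha : a ∈ Icc (0:ℝ) 1)
    (hb : b ∈ Icc (0:ℝ) 1) (hv : v ∈ Icc (0:ℝ) 1) : |C a v - C b v| ≤ |a - b| := by
  rcases le_total a b with h | h
  · have m := mono_left hC ha hb hv h
    have l := lip_left hC ha hb hv h
    rw [abs_sub_comm, abs_of_nonneg (by linarith), abs_sub_comm (a:=a), abs_of_nonneg (by linarith)]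
    linarith
  · have m := mono_left hC hb ha hv h
    have l := lip_left hC hb ha hv h
    rw [abs_of_nonneg (by linarith), abs_of_nonneg (by linarith)]
    linarith

lemma abs_right (hC : IsCopula C) {u a b : ℝ} (hu : u ∈ Icc (0:ℝ) 1)
    (ha : a ∈ Icc (0:ℝ) 1) (hb : b ∈ Icc (0:ℝ) 1) : |C u a - C u b| ≤ |a - b| := by
  rcases le_total a b with h | h
  · have m := mono_right hC hu ha hb h
    have l := lip_right hC hu ha hb h
    rw [abs_sub_comm, abs_of_nonneg (by linarith), abs_sub_comm (a:=a), abs_of_nonneg (by linarith)]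
    linarith
  · have m := mono_right hC hu hb ha h
    have l := lip_right hC hu hb ha h
    rw [abs_of_nonneg (by linarith), abs_of_nonneg (by linarith)]
    linarith

lemma continuousOn (hC : IsCopula C) :
    ContinuousOn (fun q : ℝ × ℝ => C q.1 q.2) (Icc (0:ℝ) 1 ×ˢ Icc (0:ℝ) 1) := by
  refine LipschitzOnWith.continuousOn (K := 2) (LipschitzOnWith.of_dist_le_mul ?_)
  rintro ⟨x1, x2⟩ ⟨hx1, hx2⟩ ⟨y1, y2⟩ ⟨hy1, hy2⟩
  simp only [Prod.dist_eq, Real.dist_eq]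
  push_cast
  have h1 : |C x1 x2 - C y1 x2| ≤ |x1 - y1| := abs_left hC hx1 hy1 hx2
  have h2 : |C y1 x2 - C y1 y2| ≤ |x2 - y2| := abs_right hC hy1 hx2 hy2
  have h3 : |C x1 x2 - C y1 y2| ≤ |C x1 x2 - C y1 x2| + |C y1 x2 - C y1 y2| := abs_sub_le _ _ _
  have h4 : |x1 - y1| ≤ max |x1 - y1| |x2 - y2| := le_max_left _ _
  have h5 : |x2 - y2| ≤ max |x1 - y1| |x2 - y2| := le_max_right _ _
  linarith

lemma le_min (hC : IsCopula C) {u v : ℝ} (hu : u ∈ Icc (0:ℝ) 1) (hv : v ∈ Icc (0:ℝ) 1) :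
    C u v ≤ min u v := by
  have h1 : C u v ≤ C u 1 := mono_right hC hu hv (by norm_num) hv.2
  have h2 : C u v ≤ C 1 v := mono_left hC hu (by norm_num) hv hu.2
  rw [(hC.2.1 u hu).2.2.1] at h1
  rw [(hC.2.1 v hv).2.2.2] at h2
  exact _root_.le_min h1 h2

lemma aesm (hC : IsCopula C) (μ : Measure (ℝ × ℝ))
    (hμs : μ ((Icc (0:ℝ) 1 ×ˢ Icc (0:ℝ) 1)ᶜ) = 0) {p : ℝ} (hp0 : 0 ≤ p) (hp1 : p ≤ 1) :
    AEStronglyMeasurable (fun q : ℝ × ℝ => C (p * q.1) (p * q.2)) μ := by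
  set cl : ℝ → ℝ := fun x => max 0 (min x 1) with hcl_def
  have hcl : Continuous cl := continuous_const.max (continuous_id.min continuous_const)
  have hmem : ∀ x : ℝ, p * cl x ∈ Icc (0:ℝ) 1 := by
    intro x
    constructor
    · exact mul_nonneg hp0 (le_max_left _ _)
    · calc p * cl x ≤ 1 * 1 :=
            mul_le_mul hp1 (max_le (by norm_num) (min_le_right _ _)) (le_max_left _ _) (by norm_num)
        _ = 1 := one_mul 1
  have hg : Continuous (fun q : ℝ × ℝ => C (p * cl q.1) (p * cl q.2)) := by
    have := (continuousOn hC).comp_continuous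
      (f := fun q : ℝ × ℝ => (p * cl q.1, p * cl q.2))
      (continuous_const.mul (hcl.comp continuous_fst) |>.prodMk
        (continuous_const.mul (hcl.comp continuous_snd)))
      (fun q => ⟨hmem q.1, hmem q.2⟩)
    exact this
  refine hg.aestronglyMeasurable.congr ?_
  have hae : ∀ᵐ q ∂μ, q ∈ Icc (0:ℝ) 1 ×ˢ Icc (0:ℝ) 1 := mem_ae_iff.2 hμs
  filter_upwards [hae] with q hq
  rcases hq with ⟨h1, h2⟩
  have c1 : cl q.1 = q.1 := by rw [hcl_def]; simp [min_eq_left h1.2, max_eq_right h1.1]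
  have c2 : cl q.2 = q.2 := by rw [hcl_def]; simp [min_eq_left h2.2, max_eq_right h2.1]
  rw [c1, c2]

end CopAux

/-- The μ-tail dependence measure: `λ_μ = (∫ Λ dμ) / (∫ min dμ)`, applied to
the tail dependence function `Λ` of the copula. -/
noncomputable def tdm (Λ : ℝ → ℝ → ℝ) (μ : Measure (ℝ × ℝ)) : ℝ :=
  (∫ q, Λ q.1 q.2 ∂μ) / (∫ q : ℝ × ℝ, min q.1 q.2 ∂μ)

theorem tdm_level_p_limit (C Λ : ℝ → ℝ → ℝ)
    (hC : IsCopula C) (hΛ : HasTDF C Λ)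
    (μ : Measure (ℝ × ℝ)) (hμ : IsTailGenMeasure μ) :
    (∀ p : ℝ, p ∈ Ioo (0:ℝ) 1 →
      Integrable (fun q : ℝ × ℝ => min (p * q.1) (p * q.2) - (p * q.1) * (p * q.2)) μ ∧
      0 < ∫ q : ℝ × ℝ, (min (p * q.1) (p * q.2) - (p * q.1) * (p * q.2)) ∂μ) ∧
    Tendsto (fun p : ℝ =>
        (∫ q : ℝ × ℝ, (C (p * q.1) (p * q.2) - (p * q.1) * (p * q.2)) ∂μ) /
        (∫ q : ℝ × ℝ, (min (p * q.1) (p * q.2) - (p * q.1) * (p * q.2)) ∂μ))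
      (nhdsWithin (0:ℝ) (Ioi 0))
      (nhds ((∫ q, Λ q.1 q.2 ∂μ) / (∫ q : ℝ × ℝ, min q.1 q.2 ∂μ))) := by
  obtain ⟨hprob, hout, hzero⟩ := hμ
  have hae : ∀ᵐ q ∂μ, q ∈ Icc (0:ℝ) 1 ×ˢ Icc (0:ℝ) 1 := mem_ae_iff.2 hout
  set T : Set (ℝ × ℝ) := (Icc (0:ℝ) 1 ×ˢ Icc (0:ℝ) 1) ∩ {q | 0 < q.1 ∧ 0 < q.2} with hT
  have hTpos : 0 < μ T := by
    by_contra h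
    push_neg at h
    have hT0 : μ T = 0 := le_antisymm h zero_le
    have hsub : Tᶜ ⊆ (Icc (0:ℝ) 1 ×ˢ Icc (0:ℝ) 1)ᶜ ∪ {q : ℝ × ℝ | q.1 = 0 ∨ q.2 = 0} := by
      intro q hq
      by_cases hs : q ∈ Icc (0:ℝ) 1 ×ˢ Icc (0:ℝ) 1
      · right
        simp only [hT, mem_compl_iff, mem_inter_iff, mem_setOf_eq, not_and] at hq
        have hnand := hq hs
        rcases hs with ⟨h1, h2⟩
        by_cases hq1 : q.1 = 0
        · exact Or.inl hq1
        · have hpos1 : 0 < q.1 := lt_of_le_of_ne h1.1 (Ne.symm hq1)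
          have : ¬ (0 < q.2) := fun hv => hnand hpos1 hv
          exact Or.inr (le_antisymm (not_lt.1 this) h2.1)
      · exact Or.inl hs
    have hlt : μ Tᶜ < 1 := by
      calc μ Tᶜ ≤ μ ((Icc (0:ℝ) 1 ×ˢ Icc (0:ℝ) 1)ᶜ) + μ {q : ℝ × ℝ | q.1 = 0 ∨ q.2 = 0} :=
            (measure_mono hsub).trans (measure_union_le _ _)
        _ = μ {q : ℝ × ℝ | q.1 = 0 ∨ q.2 = 0} := by rw [hout, zero_add]
        _ < 1 := hzero
    have hge : (1:ENNReal) ≤ μ T + μ Tᶜ := by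
      calc (1:ENNReal) = μ univ := measure_univ.symm
        _ = μ (T ∪ Tᶜ) := by rw [union_compl_self]
        _ ≤ μ T + μ Tᶜ := measure_union_le _ _
    rw [hT0, zero_add] at hge
    exact absurd hge (not_le.2 hlt)
  constructor
  · rintro p ⟨hp0, hp1⟩
    have hcont : Continuous (fun q : ℝ × ℝ => min (p * q.1) (p * q.2) - (p * q.1) * (p * q.2)) :=
      ((continuous_const.mul continuous_fst).min (continuous_const.mul continuous_snd)).sub
        ((continuous_const.mul continuous_fst).mul (continuous_const.mul continuous_snd))
    have hbound : ∀ᵐ q ∂μ, ‖min (p * q.1) (p * q.2) - (p * q.1) * (p * q.2)‖ ≤ (2:ℝ) := by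
      filter_upwards [hae] with q hq
      rcases hq with ⟨h1, h2⟩
      have ha : 0 ≤ min (p * q.1) (p * q.2) :=
        _root_.le_min (mul_nonneg hp0.le h1.1) (mul_nonneg hp0.le h2.1)
      have hb : min (p * q.1) (p * q.2) ≤ p * q.1 := min_le_left _ _
      have hc : p * q.1 ≤ 1 := mul_le_one₀ hp1.le h1.1 h1.2
      have hd : 0 ≤ (p * q.1) * (p * q.2) :=
        mul_nonneg (mul_nonneg hp0.le h1.1) (mul_nonneg hp0.le h2.1)
      have he : (p * q.1) * (p * q.2) ≤ 1 :=
        mul_le_one₀ hc (mul_nonneg hp0.le h2.1) (mul_le_one₀ hp1.le h2.1 h2.2)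
      rw [Real.norm_eq_abs, abs_sub_le_iff]
      constructor <;> linarith
    have hint : Integrable (fun q : ℝ × ℝ => min (p * q.1) (p * q.2) - (p * q.1) * (p * q.2)) μ :=
      (integrable_const (2:ℝ)).mono' hcont.aestronglyMeasurable hbound
    refine ⟨hint, ?_⟩
    have hnn : 0 ≤ᵐ[μ] fun q : ℝ × ℝ => min (p * q.1) (p * q.2) - (p * q.1) * (p * q.2) := by
      filter_upwards [hae] with q hq
      rcases hq with ⟨h1, h2⟩
      rcases le_total q.1 q.2 with h | h
      · have hm : min (p * q.1) (p * q.2) = p * q.1 :=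
          min_eq_left (mul_le_mul_of_nonneg_left h hp0.le)
        have hv1 : p * q.2 ≤ 1 := mul_le_one₀ hp1.le h2.1 h2.2
        simp only [Pi.zero_apply, hm]
        nlinarith [mul_nonneg hp0.le h1.1]
      · have hm : min (p * q.1) (p * q.2) = p * q.2 :=
          min_eq_right (mul_le_mul_of_nonneg_left h hp0.le)
        have hu1 : p * q.1 ≤ 1 := mul_le_one₀ hp1.le h1.1 h1.2
        simp only [Pi.zero_apply, hm]
        nlinarith [mul_nonneg hp0.le h2.1]
    rw [integral_pos_iff_support_of_nonneg_ae hnn hint]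
    refine lt_of_lt_of_le hTpos (measure_mono ?_)
    rintro q ⟨⟨h1, h2⟩, hq1, hq2⟩
    have hlt : (p * q.1) * (p * q.2) < min (p * q.1) (p * q.2) := by
      have hu0 : 0 < p * q.1 := mul_pos hp0 hq1
      have hv0 : 0 < p * q.2 := mul_pos hp0 hq2
      rcases le_total q.1 q.2 with h | h
      · rw [min_eq_left (mul_le_mul_of_nonneg_left h hp0.le)]
        have : p * q.2 < 1 := lt_of_le_of_lt (mul_le_of_le_one_right hp0.le h2.2) hp1
        nlinarith
      · rw [min_eq_right (mul_le_mul_of_nonneg_left h hp0.le)]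
        have : p * q.1 < 1 := lt_of_le_of_lt (mul_le_of_le_one_right hp0.le h1.2) hp1
        nlinarith
    exact ne_of_gt (by linarith : (0:ℝ) < min (p * q.1) (p * q.2) - (p * q.1) * (p * q.2))
  · set l := nhdsWithin (0:ℝ) (Ioi 0) with hl
    have hIoo : Ioo (0:ℝ) 1 ∈ l := Ioo_mem_nhdsGT_of_mem ⟨le_refl _, one_pos⟩
    have hmulT : ∀ q : ℝ × ℝ, Tendsto (fun p : ℝ => p * (q.1 * q.2)) l (nhds 0) := by
      intro q
      have h := (continuous_id.mul (continuous_const : Continuous fun _ : ℝ => q.1 * q.2)).tendsto (0:ℝ)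
      simp only [Pi.mul_apply, id_eq, zero_mul] at h
      exact h.mono_left nhdsWithin_le_nhds
    have hNum : Tendsto
        (fun p : ℝ => ∫ q : ℝ × ℝ, (C (p * q.1) (p * q.2) / p - p * (q.1 * q.2)) ∂μ) l
        (nhds (∫ q, Λ q.1 q.2 ∂μ)) := by
      apply tendsto_integral_filter_of_dominated_convergence (bound := fun _ => (2:ℝ))
      · filter_upwards [hIoo] with p hp
        exact (((CopAux.aesm hC μ hout hp.1.le hp.2.le).aemeasurable.div_const p).sub
          ((continuous_const.mul (continuous_fst.mul continuous_snd)).aemeasurable)).aestronglyMeasurable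
      · filter_upwards [hIoo] with p hp
        filter_upwards [hae] with q hq
        rcases hq with ⟨h1, h2⟩
        have hmu : p * q.1 ∈ Icc (0:ℝ) 1 :=
          ⟨mul_nonneg hp.1.le h1.1, mul_le_one₀ hp.2.le h1.1 h1.2⟩
        have hmv : p * q.2 ∈ Icc (0:ℝ) 1 :=
          ⟨mul_nonneg hp.1.le h2.1, mul_le_one₀ hp.2.le h2.1 h2.2⟩
        have hc0 : 0 ≤ C (p * q.1) (p * q.2) := (hC.1 _ hmu _ hmv).1
        have hcle : C (p * q.1) (p * q.2) ≤ p :=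
          ((CopAux.le_min hC hmu hmv).trans (min_le_left _ _)).trans
            (mul_le_of_le_one_right hp.1.le h1.2)
        have hdiv0 : 0 ≤ C (p * q.1) (p * q.2) / p := div_nonneg hc0 hp.1.le
        have hdiv1 : C (p * q.1) (p * q.2) / p ≤ 1 := (div_le_one hp.1).2 hcle
        have hm0 : 0 ≤ p * (q.1 * q.2) := mul_nonneg hp.1.le (mul_nonneg h1.1 h2.1)
        have hm1 : p * (q.1 * q.2) ≤ 1 :=
          mul_le_one₀ hp.2.le (mul_nonneg h1.1 h2.1) (mul_le_one₀ h1.2 h2.1 h2.2)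
        rw [Real.norm_eq_abs, abs_sub_le_iff]
        constructor <;> linarith
      · exact integrable_const 2
      · filter_upwards [hae] with q hq
        have h1 := hΛ q.1 q.2 hq.1.1 hq.2.1
        simpa using h1.sub (hmulT q)
    have hDen : Tendsto
        (fun p : ℝ => ∫ q : ℝ × ℝ, (min q.1 q.2 - p * (q.1 * q.2)) ∂μ) l
        (nhds (∫ q : ℝ × ℝ, min q.1 q.2 ∂μ)) := by
      apply tendsto_integral_filter_of_dominated_convergence (bound := fun _ => (2:ℝ))
      · exact Eventually.of_forall fun p =>
          ((continuous_fst.min continuous_snd).sub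
            (continuous_const.mul (continuous_fst.mul continuous_snd))).aestronglyMeasurable
      · filter_upwards [hIoo] with p hp
        filter_upwards [hae] with q hq
        rcases hq with ⟨h1, h2⟩
        have ha : 0 ≤ min q.1 q.2 := _root_.le_min h1.1 h2.1
        have hb : min q.1 q.2 ≤ 1 := (min_le_left _ _).trans h1.2
        have hm0 : 0 ≤ p * (q.1 * q.2) := mul_nonneg hp.1.le (mul_nonneg h1.1 h2.1)
        have hm1 : p * (q.1 * q.2) ≤ 1 :=
          mul_le_one₀ hp.2.le (mul_nonneg h1.1 h2.1) (mul_le_one₀ h1.2 h2.1 h2.2)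
        rw [Real.norm_eq_abs, abs_sub_le_iff]
        constructor <;> linarith
      · exact integrable_const 2
      · exact Eventually.of_forall fun q => by
          simpa using (tendsto_const_nhds (x := min q.1 q.2) (f := l)).sub (hmulT q)
    have hminnn : 0 ≤ᵐ[μ] fun q : ℝ × ℝ => min q.1 q.2 := by
      filter_upwards [hae] with q hq
      exact _root_.le_min hq.1.1 hq.2.1
    have hminint : Integrable (fun q : ℝ × ℝ => min q.1 q.2) μ := by
      refine (integrable_const (1:ℝ)).mono'
        ((continuous_fst.min continuous_snd).aestronglyMeasurable) ?_
      filter_upwards [hae] with q hq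
      rw [Real.norm_eq_abs, abs_of_nonneg (_root_.le_min hq.1.1 hq.2.1)]
      exact (min_le_left _ _).trans hq.1.2
    have hminpos : 0 < ∫ q : ℝ × ℝ, min q.1 q.2 ∂μ := by
      rw [integral_pos_iff_support_of_nonneg_ae hminnn hminint]
      refine lt_of_lt_of_le hTpos (measure_mono ?_)
      rintro q ⟨-, hq1, hq2⟩
      exact ne_of_gt (lt_min hq1 hq2)
    have hne : (∫ q : ℝ × ℝ, min q.1 q.2 ∂μ) ≠ 0 := ne_of_gt hminpos
    refine Tendsto.congr' ?_ (hNum.div hDen hne)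
    filter_upwards [hIoo] with p hp
    have eN : (∫ q : ℝ × ℝ, (C (p * q.1) (p * q.2) - (p * q.1) * (p * q.2)) ∂μ) / p
        = ∫ q : ℝ × ℝ, (C (p * q.1) (p * q.2) / p - p * (q.1 * q.2)) ∂μ := by
      rw [← integral_div]
      refine integral_congr_ae (Eventually.of_forall fun q => ?_)
      dsimp only
      have hq : (p * q.1) * (p * q.2) = (p * (q.1 * q.2)) * p := by ring
      rw [sub_div, hq, mul_div_cancel_right₀ _ hp.1.ne']
    have eD : (∫ q : ℝ × ℝ, (min (p * q.1) (p * q.2) - (p * q.1) * (p * q.2)) ∂μ) / p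
        = ∫ q : ℝ × ℝ, (min q.1 q.2 - p * (q.1 * q.2)) ∂μ := by
      rw [← integral_div]
      refine integral_congr_ae (Eventually.of_forall fun q => ?_)
      dsimp only
      have hq : (p * q.1) * (p * q.2) = (p * (q.1 * q.2)) * p := by ring
      rw [← mul_min_of_nonneg _ _ hp.1.le, sub_div, hq,
        mul_div_cancel_right₀ _ hp.1.ne', mul_div_cancel_left₀ _ hp.1.ne']
    simp only [Pi.div_apply]
    rw [← eN, ← eD, div_div_div_comm, div_self hp.1.ne', div_one]
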